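/- Fix t̂ > τ and let f̂(u) = f_{c,1}(u) for 0 < u ≤ τ, f̂(u) = f_{c,2}(u) for τ < u ≤ t̂, and f̂(u) = 0 for u > t̂ (negative-feedback release rate). Then the fraction of recyclable molecules satisfies lim_{t→∞} ∫₀^t f̂(u) H(t − u) du + ∫_{t̂}^∞ f_{c,2}(t) dt = C Σ_n c_n [H_∞ τ + (1 − H_∞)(exp(−D_v λ_n² (t̂ − τ)) − exp(−D_v λ_n² t̂))/(D_v λ_n²)]. (Theorem 4, case t̂ > τ, the fraction χ₂(t̂) = β₁(t→∞) + β₂(t̂).) -/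

import Mathlib

open MeasureTheory Filter Topology

noncomputable def erf (x : ℝ) : ℝ := (2 / Real.sqrt Real.pi) * ∫ u in (0:ℝ)..x, Real.exp (-u ^ 2)

noncomputable def erfc (x : ℝ) : ℝ := 1 - erf x

open Set Real

lemma gauss_int : ∀ x : ℝ, Real.exp (-x ^ 2) = Real.exp (-1 * x ^ 2) := by
  intro x; norm_num

lemma gauss_integrableOn : IntegrableOn (fun u : ℝ => Real.exp (-u ^ 2)) (Ioi 0) := by
  simp_rw [gauss_int]
  exact (integrable_exp_neg_mul_sq one_pos).integrableOn

lemma erf_continuous : Continuous erf := by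
  apply Continuous.mul continuous_const
  apply intervalIntegral.continuous_primitive
  intro a b
  exact (Real.continuous_exp.comp (by continuity)).intervalIntegrable a b

lemma erf_tendsto_one : Tendsto erf atTop (𝓝 1) := by
  have h := intervalIntegral_tendsto_integral_Ioi 0 gauss_integrableOn tendsto_id
  have h2 : (∫ u in Ioi (0:ℝ), Real.exp (-u ^ 2)) = Real.sqrt Real.pi / 2 := by
    simp_rw [gauss_int]
    rw [integral_gaussian_Ioi]
    norm_num
  rw [h2] at h
  have h3 : (2 / Real.sqrt Real.pi) * (Real.sqrt Real.pi / 2) = 1 := by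
    have : Real.sqrt Real.pi ≠ 0 := by positivity
    field_simp
  have := (tendsto_const_nhds.mul h : Tendsto (fun x : ℝ => (2 / Real.sqrt Real.pi) * ∫ u in (0:ℝ)..x, Real.exp (-u^2)) atTop (𝓝 ((2 / Real.sqrt Real.pi) * (Real.sqrt Real.pi / 2))))
  rw [h3] at this
  exact this

lemma erf_eq_Ioi (x : ℝ) (hx : 0 ≤ x) :
    erfc x = (2 / Real.sqrt Real.pi) * ∫ u in Ioi x, Real.exp (-u ^ 2) := by
  have hsplit : (∫ u in Ioi (0:ℝ), Real.exp (-u ^ 2)) =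
      (∫ u in Ioc (0:ℝ) x, Real.exp (-u ^ 2)) + ∫ u in Ioi x, Real.exp (-u ^ 2) := by
    rw [← setIntegral_union (Ioc_disjoint_Ioi le_rfl) measurableSet_Ioi
      (gauss_integrableOn.mono_set Ioc_subset_Ioi_self) (gauss_integrableOn.mono_set (Ioi_subset_Ioi hx)),
      Ioc_union_Ioi_eq_Ioi hx]
  have h0 : (∫ u in Ioi (0:ℝ), Real.exp (-u ^ 2)) = Real.sqrt Real.pi / 2 := by
    simp_rw [gauss_int]; rw [integral_gaussian_Ioi]; norm_num
  have hiv : (∫ u in (0:ℝ)..x, Real.exp (-u ^ 2)) = ∫ u in Ioc (0:ℝ) x, Real.exp (-u ^ 2) := by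
    rw [intervalIntegral.integral_of_le hx]
  have hpi : Real.sqrt Real.pi ≠ 0 := by positivity
  rw [erfc, erf, hiv]
  rw [h0] at hsplit
  have : (∫ u in Ioc (0:ℝ) x, Real.exp (-u ^ 2)) = Real.sqrt Real.pi / 2 - ∫ u in Ioi x, Real.exp (-u ^ 2) := by linarith
  rw [this]
  field_simp
  ring

lemma erfc_nonneg (x : ℝ) (hx : 0 ≤ x) : 0 ≤ erfc x := by
  rw [erf_eq_Ioi x hx]
  have : 0 ≤ ∫ u in Ioi x, Real.exp (-u ^ 2) :=
    setIntegral_nonneg measurableSet_Ioi (fun u _ => (Real.exp_pos _).le)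
  positivity

lemma erfc_le (x : ℝ) (hx : 1 ≤ x) : erfc x ≤ (2 / Real.sqrt Real.pi) * Real.exp (-x ^ 2) := by
  have hx0 : (0:ℝ) ≤ x := by linarith
  rw [erf_eq_Ioi x hx0]
  have hInt2 : IntegrableOn (fun u : ℝ => Real.exp (-x^2 + x) * Real.exp (-u)) (Ioi x) := by
    have h := (exp_neg_integrableOn_Ioi x one_pos).const_mul (Real.exp (-x^2 + x))
    simpa [IntegrableOn] using h
  have hmono : (∫ u in Ioi x, Real.exp (-u ^ 2)) ≤ ∫ u in Ioi x, Real.exp (-x^2 + x) * Real.exp (-u) := by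
    apply setIntegral_mono_on (gauss_integrableOn.mono_set (Ioi_subset_Ioi hx0)) hInt2 measurableSet_Ioi
    intro u hu
    rw [Set.mem_Ioi] at hu
    rw [← Real.exp_add]
    apply Real.exp_le_exp.2
    nlinarith
  have hval : (∫ u in Ioi x, Real.exp (-x^2 + x) * Real.exp (-u)) = Real.exp (-x^2) := by
    rw [integral_const_mul, integral_exp_neg_Ioi, ← Real.exp_add]
    congr 1
    ring
  rw [hval] at hmono
  have h2 : (0:ℝ) ≤ 2 / Real.sqrt Real.pi := by positivity
  exact mul_le_mul_of_nonneg_left hmono h2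

lemma erf_comp_tendsto {kd : ℝ} (hkd : 0 < kd) :
    Tendsto (fun t : ℝ => erf (Real.sqrt (kd * t))) atTop (𝓝 1) := by
  apply erf_tendsto_one.comp
  refine tendsto_atTop.2 fun b => ?_
  filter_upwards [eventually_ge_atTop ((max b 0) ^ 2 / kd)] with t ht
  have h2 : (max b 0) ^ 2 ≤ kd * t := by
    rw [div_le_iff₀ hkd] at ht; linarith
  calc b ≤ max b 0 := le_max_left _ _
  _ = Real.sqrt ((max b 0) ^ 2) := (Real.sqrt_sq (le_max_right _ _)).symm
  _ ≤ Real.sqrt (kd * t) := Real.sqrt_le_sqrt h2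

lemma expzeta_erfc_tendsto {Dσ kd γ ζ : ℝ} (hDσ : 0 < Dσ) (hkd : 0 < kd) (hγ : 0 < γ)
    (hζdef : ζ = γ ^ 2 * Dσ - kd) :
    Tendsto (fun t : ℝ => Real.exp (ζ * t) * erfc (γ * Real.sqrt (Dσ * t))) atTop (𝓝 0) := by
  have hbig : ∀ᶠ t : ℝ in atTop, 1 ≤ γ * Real.sqrt (Dσ * t) := by
    filter_upwards [eventually_ge_atTop (1 / (γ^2 * Dσ))] with t ht
    have ht0 : 0 ≤ t := le_trans (by positivity) ht
    have h1 : (1:ℝ)/γ ≤ Real.sqrt (Dσ * t) := by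
      rw [show (1:ℝ)/γ = Real.sqrt ((1/γ)^2) by rw [Real.sqrt_sq (by positivity)]]
      apply Real.sqrt_le_sqrt
      rw [div_pow, one_pow]
      rw [div_le_iff₀ (by positivity)] at ht ⊢
      nlinarith
    calc (1:ℝ) = γ * (1/γ) := by field_simp
    _ ≤ γ * Real.sqrt (Dσ * t) := by nlinarith
  apply squeeze_zero' (g := fun t => (2 / Real.sqrt Real.pi) * Real.exp (-kd * t))
  · filter_upwards [hbig] with t ht
    have : 0 ≤ erfc (γ * Real.sqrt (Dσ * t)) := erfc_nonneg _ (by linarith)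
    positivity
  · filter_upwards [hbig, eventually_ge_atTop (0:ℝ)] with t ht ht0
    have hsq : (γ * Real.sqrt (Dσ * t)) ^ 2 = γ ^ 2 * (Dσ * t) := by
      rw [mul_pow, Real.sq_sqrt (by positivity)]
    calc Real.exp (ζ * t) * erfc (γ * Real.sqrt (Dσ * t))
        ≤ Real.exp (ζ * t) * ((2 / Real.sqrt Real.pi) * Real.exp (-(γ * Real.sqrt (Dσ * t)) ^ 2)) := by
          exact mul_le_mul_of_nonneg_left (erfc_le _ ht) (Real.exp_pos _).le
      _ = (2 / Real.sqrt Real.pi) * Real.exp (-kd * t) := by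
          rw [hsq, ← mul_assoc, mul_comm (Real.exp (ζ * t)), mul_assoc, ← Real.exp_add]
          congr 2
          rw [hζdef]; ring
  · rw [show (0:ℝ) = (2 / Real.sqrt Real.pi) * 0 by ring]
    apply Tendsto.const_mul
    apply Real.tendsto_exp_atBot.comp
    exact (tendsto_const_mul_atBot_of_neg (by linarith)).2 tendsto_id

lemma H_tendsto {Dσ kd γ w ζ Hinf : ℝ} (hDσ : 0 < Dσ) (hkd : 0 < kd) (hγ : 0 < γ)
    (hζdef : ζ = γ ^ 2 * Dσ - kd) (hζ : ζ ≠ 0)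
    (H : ℝ → ℝ)
    (hH : ∀ t, 0 < t → H t = w / Real.sqrt (kd * Dσ) * erf (Real.sqrt (kd * t)) -
          w * γ / ζ * (Real.exp (ζ * t) * erfc (γ * Real.sqrt (Dσ * t)) +
            γ * Real.sqrt (Dσ / kd) * erf (Real.sqrt (kd * t)) - 1))
    (hHinf : Hinf = w / Real.sqrt (Dσ * kd) - w * γ ^ 2 / ζ * Real.sqrt (Dσ / kd) + w * γ / ζ) :
    Tendsto H atTop (𝓝 Hinf) := by
  have h1 := erf_comp_tendsto hkd
  have h2 := expzeta_erfc_tendsto hDσ hkd hγ hζdef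
  have hform : Tendsto (fun t : ℝ => w / Real.sqrt (kd * Dσ) * erf (Real.sqrt (kd * t)) -
      w * γ / ζ * (Real.exp (ζ * t) * erfc (γ * Real.sqrt (Dσ * t)) +
        γ * Real.sqrt (Dσ / kd) * erf (Real.sqrt (kd * t)) - 1)) atTop
      (𝓝 (w / Real.sqrt (kd * Dσ) * 1 - w * γ / ζ * (0 + γ * Real.sqrt (Dσ / kd) * 1 - 1))) := by
    exact (tendsto_const_nhds.mul h1).sub
      (tendsto_const_nhds.mul ((h2.add (tendsto_const_nhds.mul h1)).sub tendsto_const_nhds))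
  have hval : w / Real.sqrt (kd * Dσ) * 1 - w * γ / ζ * (0 + γ * Real.sqrt (Dσ / kd) * 1 - 1) = Hinf := by
    rw [hHinf, mul_comm kd Dσ]
    ring
  rw [hval] at hform
  apply hform.congr'
  filter_upwards [eventually_gt_atTop (0:ℝ)] with t ht
  exact (hH t ht).symm

lemma int_exp_interval {b : ℝ} (hb : b ≠ 0) (s t : ℝ) :
    ∫ x in s..t, Real.exp (-(b * x)) = (Real.exp (-(b * s)) - Real.exp (-(b * t))) / b := by
  have : ∀ x : ℝ, Real.exp (-(b * x)) = Real.exp ((-b) * x) := by intro x; ring_nf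
  simp_rw [this]
  rw [intervalIntegral.integral_comp_mul_left Real.exp (neg_ne_zero.2 hb), integral_exp]
  rw [smul_eq_mul, ← div_eq_inv_mul, div_eq_div_iff (neg_ne_zero.2 hb) hb]
  ring

lemma integrableOn_exp_Ioi {b : ℝ} (hb : 0 < b) (s : ℝ) :
    IntegrableOn (fun x : ℝ => Real.exp (-(b * x))) (Set.Ioi s) := by
  have := exp_neg_integrableOn_Ioi s hb
  simpa [neg_mul] using this

lemma int_exp_Ioi {b : ℝ} (hb : 0 < b) (s : ℝ) :
    ∫ x in Set.Ioi s, Real.exp (-(b * x)) = Real.exp (-(b * s)) / b := by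
  have h := intervalIntegral_tendsto_integral_Ioi s (integrableOn_exp_Ioi hb s) tendsto_id
  have h2 : Tendsto (fun T : ℝ => (Real.exp (-(b * s)) - Real.exp (-(b * T))) / b) atTop
      (𝓝 ((Real.exp (-(b * s)) - 0) / b)) := by
    apply Tendsto.div_const
    apply tendsto_const_nhds.sub
    apply Real.tendsto_exp_atBot.comp
    simp_rw [neg_mul_eq_neg_mul]
    exact (tendsto_const_mul_atBot_of_neg (by linarith)).2 tendsto_id
  rw [sub_zero] at h2
  have heq : ∀ T, (∫ x in s..T, Real.exp (-(b * x))) = (Real.exp (-(b * s)) - Real.exp (-(b * T))) / b :=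
    fun T => int_exp_interval hb.ne' s T
  simp_rw [heq] at h
  exact tendsto_nhds_unique h h2

lemma exp_term_bound1 {a u : ℝ} (ha : 0 < a) (hu : 0 ≤ u) : |1 - Real.exp (-(a * u))| ≤ 1 := by
  have h1 : Real.exp (-(a * u)) ≤ 1 := Real.exp_le_one_iff.2 (by nlinarith)
  have h2 : 0 < Real.exp (-(a * u)) := Real.exp_pos _
  rw [abs_le]; constructor <;> nlinarith

lemma exp_term_bound2 {a b v : ℝ} (ha : 0 < a) (hb : 0 ≤ b) (hv : b ≤ v) :
    Real.exp (-(a * (v - b))) - Real.exp (-(a * v)) ∈ Set.Icc (0:ℝ) 1 := by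
  have h1 : Real.exp (-(a * v)) ≤ Real.exp (-(a * (v - b))) := Real.exp_le_exp.2 (by nlinarith)
  have h2 : Real.exp (-(a * (v - b))) ≤ 1 := Real.exp_le_one_iff.2 (by nlinarith)
  have h3 : 0 < Real.exp (-(a * v)) := Real.exp_pos _
  constructor <;> [linarith; linarith]

lemma abs_tsum_le {c f : ℕ → ℝ} (hsum : Summable fun n => |c n|) (h : ∀ n, |f n| ≤ |c n|) :
    |∑' n, f n| ≤ ∑' n, |c n| := by
  have hf : Summable f := by
    apply Summable.of_norm_bounded hsum
    intro n; exact h n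
  calc |∑' n, f n| ≤ ∑' n, |f n| := by
        have := norm_tsum_le_tsum_norm (f := f) (by simpa [Real.norm_eq_abs] using hsum.of_nonneg_of_le (fun n => abs_nonneg _) h)
        simpa [Real.norm_eq_abs] using this
    _ ≤ ∑' n, |c n| := Summable.tsum_le_tsum h (hsum.of_nonneg_of_le (fun n => abs_nonneg _) h) hsum

set_option maxHeartbeats 1000000 in
theorem stmt_18
    (rT kf μ Nv Dv : ℝ)
    (hrT : 0 < rT) (hkf : 0 < kf) (hμ : 0 < μ) (hNv : 0 < Nv) (hDv : 0 < Dv)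
    (τ : ℝ) (hτ : τ = Nv / μ)
    (C : ℝ) (hCdef : C = 4 * rT ^ 2 * kf * μ / (Nv * Dv))
    (lam : ℕ → ℝ) (hlam : ∀ n, 0 < lam n)
    (hne : ∀ n, 2 * lam n * rT ≠ Real.sin (2 * lam n * rT))
    (c : ℕ → ℝ)
    (hc : ∀ n, c n = lam n * (Real.sin (lam n * rT) / (lam n * rT)) /
          (2 * lam n * rT - Real.sin (2 * lam n * rT)))
    (hsum : Summable fun n => |c n|)
    (fc1 : ℝ → ℝ)
    (hfc1 : ∀ t, fc1 t = C * ∑' n, c n * (1 - Real.exp (-(Dv * lam n ^ 2 * t))))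
    (fc2 : ℝ → ℝ)
    (hfc2 : ∀ t, fc2 t = C * ∑' n, c n *
          (Real.exp (-(Dv * lam n ^ 2 * (t - τ))) - Real.exp (-(Dv * lam n ^ 2 * t))))
    (Dσ kd γ w : ℝ) (hDσ : 0 < Dσ) (hkd : 0 < kd) (hγ : 0 < γ)
    (ζ : ℝ) (hζdef : ζ = γ ^ 2 * Dσ - kd) (hζ : ζ ≠ 0)
    (H : ℝ → ℝ)
    (hH : ∀ t, 0 < t → H t = w / Real.sqrt (kd * Dσ) * erf (Real.sqrt (kd * t)) -
          w * γ / ζ * (Real.exp (ζ * t) * erfc (γ * Real.sqrt (Dσ * t)) +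
            γ * Real.sqrt (Dσ / kd) * erf (Real.sqrt (kd * t)) - 1))
    (Hinf : ℝ)
    (hHinf : Hinf = w / Real.sqrt (Dσ * kd) - w * γ ^ 2 / ζ * Real.sqrt (Dσ / kd) + w * γ / ζ)
    (tHat : ℝ) (h1 : τ < tHat)
    (fhat : ℝ → ℝ)
    (hfa : ∀ u, 0 < u → u ≤ τ → fhat u = fc1 u)
    (hfb : ∀ u, τ < u → u ≤ tHat → fhat u = fc2 u)
    (hfz : ∀ u, tHat < u → fhat u = 0) :
    Tendsto (fun t => (∫ u in (0:ℝ)..t, fhat u * H (t - u)) + ∫ x in Set.Ioi tHat, fc2 x) atTop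
      (𝓝 (C * ∑' n, c n * (Hinf * τ + (1 - Hinf) *
        (Real.exp (-(Dv * lam n ^ 2 * (tHat - τ))) - Real.exp (-(Dv * lam n ^ 2 * tHat))) /
          (Dv * lam n ^ 2)))) := by
  have hτ0 : 0 < τ := hτ ▸ div_pos hNv hμ
  have htHat0 : 0 < tHat := lt_trans hτ0 h1
  set a : ℕ → ℝ := fun n => Dv * lam n ^ 2 with ha_def
  have ha : ∀ n, 0 < a n := fun n => by have := hlam n; positivity
  -- surrogates
  set F : ℝ → ℝ := fun u => C * ∑' n, c n * (1 - Real.exp (-(a n * max u 0))) with hFdef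
  set G : ℝ → ℝ := fun u => C * ∑' n, c n *
      (Real.exp (-(a n * (max u τ - τ))) - Real.exp (-(a n * max u τ))) with hGdef
  set g : ℝ → ℝ := fun u => (Set.Ioc (0:ℝ) τ).indicator F u + (Set.Ioc τ tHat).indicator G u
    with hgdef
  -- termwise bounds
  have hbd1 : ∀ (n : ℕ) (u : ℝ), ‖c n * (1 - Real.exp (-(a n * max u 0)))‖ ≤ |c n| := by
    intro n u
    rw [Real.norm_eq_abs, abs_mul]
    have h := exp_term_bound1 (ha n) (le_max_right u 0)
    nlinarith [abs_nonneg (c n)]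
  have hbd2 : ∀ (n : ℕ) (u : ℝ), ‖c n *
      (Real.exp (-(a n * (max u τ - τ))) - Real.exp (-(a n * max u τ)))‖ ≤ |c n| := by
    intro n u
    rw [Real.norm_eq_abs, abs_mul]
    have h := exp_term_bound2 (ha n) hτ0.le (le_max_right u τ)
    have habs : |Real.exp (-(a n * (max u τ - τ))) - Real.exp (-(a n * max u τ))| ≤ 1 :=
      abs_le.2 ⟨by linarith [h.1], h.2⟩
    nlinarith [abs_nonneg (c n)]
  -- continuity of surrogates
  have hFc : Continuous F := by
    apply continuous_const.mul
    apply continuous_tsum ?_ hsum (fun n u => hbd1 n u)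
    intro n
    have : Continuous fun u : ℝ => -(a n * max u 0) :=
      (continuous_const.mul (continuous_id.max continuous_const)).neg
    exact continuous_const.mul (continuous_const.sub (Real.continuous_exp.comp this))
  have hGc : Continuous G := by
    apply continuous_const.mul
    apply continuous_tsum ?_ hsum (fun n u => hbd2 n u)
    intro n
    have h1c : Continuous fun u : ℝ => -(a n * (max u τ - τ)) :=
      (continuous_const.mul ((continuous_id.max continuous_const).sub continuous_const)).neg
    have h2c : Continuous fun u : ℝ => -(a n * max u τ) :=
      (continuous_const.mul (continuous_id.max continuous_const)).neg
    exact continuous_const.mul ((Real.continuous_exp.comp h1c).sub (Real.continuous_exp.comp h2c))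
  have hFeq : ∀ u, 0 ≤ u → F u = fc1 u := by
    intro u hu; rw [hfc1, hFdef]; simp only [max_eq_left hu, ha_def]
  have hGeq : ∀ u, τ ≤ u → G u = fc2 u := by
    intro u hu; rw [hfc2, hGdef]; simp only [max_eq_left hu, ha_def]
  have hfg : ∀ u, 0 < u → fhat u = g u := by
    intro u hu
    rcases le_or_gt u τ with h2 | h2
    · rw [hfa u hu h2, hgdef]
      simp only
      rw [Set.indicator_of_mem (Set.mem_Ioc.2 ⟨hu, h2⟩), Set.indicator_of_notMem (by simp [Set.mem_Ioc]; intro h; linarith)]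
      rw [hFeq u hu.le, add_zero]
    · rcases le_or_gt u tHat with h3 | h3
      · rw [hfb u h2 h3, hgdef]
        simp only
        rw [Set.indicator_of_notMem (by simp [Set.mem_Ioc]; intro h; linarith),
          Set.indicator_of_mem (Set.mem_Ioc.2 ⟨h2, h3⟩), hGeq u h2.le, zero_add]
      · rw [hfz u h3, hgdef]
        simp only
        rw [Set.indicator_of_notMem (by simp [Set.mem_Ioc]; intro h; linarith),
          Set.indicator_of_notMem (by simp [Set.mem_Ioc]; intro h; linarith), add_zero]
  have hgmeas : Measurable g :=
    (hFc.measurable.indicator measurableSet_Ioc).add (hGc.measurable.indicator measurableSet_Ioc)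
  have hg0 : ∀ u, u ∉ Set.Ioc (0:ℝ) tHat → g u = 0 := by
    intro u hu
    rw [hgdef]
    simp only
    rw [Set.indicator_of_notMem, Set.indicator_of_notMem, add_zero]
    · intro h; exact hu ⟨lt_trans hτ0 h.1, h.2⟩
    · intro h; exact hu ⟨h.1, le_trans h.2 h1.le⟩
  set Mg : ℝ := |C| * ∑' n, |c n| with hMgdef
  have hMg0 : 0 ≤ Mg := by
    apply mul_nonneg (abs_nonneg _)
    exact tsum_nonneg fun n => abs_nonneg _
  have hFbd : ∀ u, |F u| ≤ Mg := by
    intro u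
    rw [hFdef, hMgdef]
    simp only
    rw [abs_mul]
    exact mul_le_mul_of_nonneg_left (abs_tsum_le hsum (fun n => hbd1 n u)) (abs_nonneg C)
  have hGbd : ∀ u, |G u| ≤ Mg := by
    intro u
    rw [hGdef, hMgdef]
    simp only
    rw [abs_mul]
    exact mul_le_mul_of_nonneg_left (abs_tsum_le hsum (fun n => hbd2 n u)) (abs_nonneg C)
  have hgbd : ∀ u, |g u| ≤ Mg := by
    intro u
    rcases Classical.em (u ∈ Set.Ioc (0:ℝ) τ) with h2 | h2
    · rw [hgdef]; simp only
      rw [Set.indicator_of_mem h2, Set.indicator_of_notMem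
        (by simp [Set.mem_Ioc]; intro h; linarith [h2.2]), add_zero]
      exact hFbd u
    · rcases Classical.em (u ∈ Set.Ioc τ tHat) with h3 | h3
      · rw [hgdef]; simp only
        rw [Set.indicator_of_notMem h2, Set.indicator_of_mem h3, zero_add]
        exact hGbd u
      · rw [hgdef]; simp only
        rw [Set.indicator_of_notMem h2, Set.indicator_of_notMem h3, add_zero]
        simpa using hMg0
  -- H surrogate
  set Htil : ℝ → ℝ := fun s => w / Real.sqrt (kd * Dσ) * erf (Real.sqrt (kd * s)) -
      w * γ / ζ * (Real.exp (ζ * s) * erfc (γ * Real.sqrt (Dσ * s)) +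
        γ * Real.sqrt (Dσ / kd) * erf (Real.sqrt (kd * s)) - 1) with hHtildef
  have hHtilc : Continuous Htil := by
    have herf : Continuous erf := erf_continuous
    have herfc : Continuous erfc := continuous_const.sub herf
    have hs1 : Continuous fun s : ℝ => erf (Real.sqrt (kd * s)) :=
      herf.comp (Real.continuous_sqrt.comp (continuous_const.mul continuous_id))
    have hs2 : Continuous fun s : ℝ => erfc (γ * Real.sqrt (Dσ * s)) :=
      herfc.comp (continuous_const.mul (Real.continuous_sqrt.comp
        (continuous_const.mul continuous_id)))
    have hexp : Continuous fun s : ℝ => Real.exp (ζ * s) :=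
      Real.continuous_exp.comp (continuous_const.mul continuous_id)
    exact (continuous_const.mul hs1).sub (continuous_const.mul
      (((hexp.mul hs2).add (continuous_const.mul hs1)).sub continuous_const))
  have hHeqt : ∀ s, 0 < s → H s = Htil s := fun s hs => hH s hs
  have hHT : Tendsto Htil atTop (𝓝 Hinf) := by
    apply (H_tendsto hDσ hkd hγ hζdef hζ H hH hHinf).congr'
    filter_upwards [eventually_gt_atTop (0:ℝ)] with s hs
    exact hHeqt s hs
  obtain ⟨T, hT⟩ : ∃ T : ℝ, ∀ s, T ≤ s → |Htil s| ≤ |Hinf| + 1 := by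
    obtain ⟨T, hT⟩ := Metric.tendsto_atTop.1 hHT 1 one_pos
    refine ⟨T, fun s hs => ?_⟩
    have h2 := hT s hs
    rw [Real.dist_eq] at h2
    calc |Htil s| = |Htil s - Hinf + Hinf| := by norm_num
    _ ≤ |Htil s - Hinf| + |Hinf| := abs_add_le _ _
    _ ≤ |Hinf| + 1 := by linarith
  set J : ℝ := ∫ x in Set.Ioi tHat, fc2 x with hJdef
  have hHtilcomp : ∀ t : ℝ, Continuous fun u : ℝ => Htil (t - u) :=
    fun t => hHtilc.comp (continuous_const.sub continuous_id)
  have hφint : ∀ (t s₁ s₂ : ℝ), IntegrableOn (fun u => g u * Htil (t - u)) (Set.Ioc s₁ s₂) := by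
    intro t s₁ s₂
    exact Integrable.bdd_mul ((hHtilcomp t).integrableOn_Ioc) hgmeas.aestronglyMeasurable.restrict
      (ae_of_all _ fun u => by rw [Real.norm_eq_abs]; exact hgbd u)
  have hev : ∀ᶠ t in atTop, (∫ u in (0:ℝ)..t, fhat u * H (t - u)) + J =
      (∫ u in (0:ℝ)..tHat, g u * Htil (t - u)) + J := by
    filter_upwards [eventually_gt_atTop tHat] with t ht
    congr 1
    have h0t : (0:ℝ) ≤ t := le_trans htHat0.le ht.le
    have e1 : (∫ u in (0:ℝ)..t, fhat u * H (t - u)) = ∫ u in (0:ℝ)..t, g u * Htil (t - u) := by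
      apply intervalIntegral.integral_congr_ae
      have hae : ∀ᵐ u : ℝ, u ≠ t := by
        rw [ae_iff]
        simp only [ne_eq, not_not]
        exact measure_singleton t
      filter_upwards [hae] with u hu hmem
      rw [Set.uIoc_of_le h0t] at hmem
      have hut : u < t := lt_of_le_of_ne hmem.2 hu
      rw [hfg u hmem.1, hHeqt (t - u) (by linarith)]
    rw [e1, intervalIntegral.integral_of_le h0t, intervalIntegral.integral_of_le htHat0.le]
    have hsplit : ∫ u in Set.Ioc (0:ℝ) t, g u * Htil (t - u) =
        (∫ u in Set.Ioc (0:ℝ) tHat, g u * Htil (t - u)) +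
          ∫ u in Set.Ioc tHat t, g u * Htil (t - u) := by
      rw [← setIntegral_union ((Set.Ioc_disjoint_Ioi le_rfl).mono_right Set.Ioc_subset_Ioi_self)
        measurableSet_Ioc (hφint t 0 tHat) (hφint t tHat t),
        Set.Ioc_union_Ioc_eq_Ioc htHat0.le ht.le]
    have h0 : (∫ u in Set.Ioc tHat t, g u * Htil (t - u)) = 0 := by
      apply setIntegral_eq_zero_of_forall_eq_zero
      intro u hu
      rw [hg0 u (fun h => absurd h.2 (not_le.2 hu.1)), zero_mul]
    rw [hsplit, h0, add_zero]
  have hlim : Tendsto (fun t => ∫ u in (0:ℝ)..tHat, g u * Htil (t - u)) atTop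
      (𝓝 (∫ u in (0:ℝ)..tHat, g u * Hinf)) := by
    apply intervalIntegral.tendsto_integral_filter_of_dominated_convergence
      (bound := fun _ => Mg * (|Hinf| + 1))
    · filter_upwards with t
      exact ((hgmeas.mul (hHtilcomp t).measurable).aestronglyMeasurable).restrict
    · filter_upwards [eventually_ge_atTop (T + tHat)] with t ht
      filter_upwards with u hu
      rw [Set.uIoc_of_le htHat0.le] at hu
      rw [Real.norm_eq_abs, abs_mul]
      exact mul_le_mul (hgbd u) (hT _ (by linarith [hu.2])) (abs_nonneg _) hMg0
    · exact intervalIntegrable_const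
    · filter_upwards with u hu
      apply tendsto_const_nhds.mul
      apply hHT.comp
      simp_rw [sub_eq_add_neg]
      exact tendsto_atTop_add_const_right atTop (-u) tendsto_id
  have hfinal : Tendsto (fun t => (∫ u in (0:ℝ)..t, fhat u * H (t - u)) +
      ∫ x in Set.Ioi tHat, fc2 x) atTop (𝓝 ((∫ u in (0:ℝ)..tHat, g u * Hinf) + J)) := by
    rw [hJdef]
    exact (Tendsto.congr' (by filter_upwards [hev] with t h2 using h2.symm) (hlim.add_const J))
  -- exponent abbreviations and per-n facts
  have hexp1 : ∀ n (u : ℝ), Real.exp (-(a n * (u - τ))) = Real.exp (a n * τ) * Real.exp (-(a n * u)) := by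
    intro n u
    rw [← Real.exp_add]
    congr 1
    ring
  have hcont1 : ∀ n, Continuous fun u : ℝ => c n * (1 - Real.exp (-(a n * max u 0))) := by
    intro n
    exact continuous_const.mul (continuous_const.sub (Real.continuous_exp.comp
      (continuous_const.mul (continuous_id.max continuous_const)).neg))
  have hcont2 : ∀ n, Continuous fun u : ℝ => c n *
      (Real.exp (-(a n * (u - τ))) - Real.exp (-(a n * u))) := by
    intro n
    exact continuous_const.mul ((Real.continuous_exp.comp
      (continuous_const.mul (continuous_id.sub continuous_const)).neg).sub
      (Real.continuous_exp.comp (continuous_const.mul continuous_id).neg))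
  -- (B) integral of F over Ioc 0 τ
  have hIF : (∫ u in Set.Ioc (0:ℝ) τ, F u) =
      C * ∑' n, c n * (τ - (1 - Real.exp (-(a n * τ))) / a n) := by
    rw [hFdef]
    simp only
    rw [MeasureTheory.integral_const_mul]
    congr 1
    have hint : ∀ n, Integrable (fun u : ℝ => c n * (1 - Real.exp (-(a n * max u 0))))
        (volume.restrict (Set.Ioc (0:ℝ) τ)) := fun n => (hcont1 n).integrableOn_Ioc
    have hnormbd : ∀ n, (∫ u in Set.Ioc (0:ℝ) τ, ‖c n * (1 - Real.exp (-(a n * max u 0)))‖) ≤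
        |c n| * τ := by
      intro n
      calc (∫ u in Set.Ioc (0:ℝ) τ, ‖c n * (1 - Real.exp (-(a n * max u 0)))‖)
          ≤ ∫ _u in Set.Ioc (0:ℝ) τ, |c n| := by
            apply setIntegral_mono_on (hint n).norm
              (integrableOn_const measure_Ioc_lt_top.ne) measurableSet_Ioc
            exact fun u _ => hbd1 n u
        _ = |c n| * τ := by
            rw [setIntegral_const, measureReal_def, Real.volume_Ioc, smul_eq_mul,
              ENNReal.toReal_ofReal (by linarith), mul_comm, sub_zero]
    have hsummable : Summable fun n => ∫ u in Set.Ioc (0:ℝ) τ,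
        ‖c n * (1 - Real.exp (-(a n * max u 0)))‖ :=
      Summable.of_nonneg_of_le (fun n => integral_nonneg fun u => norm_nonneg _)
        hnormbd (hsum.mul_right τ)
    rw [← integral_tsum_of_summable_integral_norm hint hsummable]
    apply tsum_congr
    intro n
    have e1 : (∫ u in Set.Ioc (0:ℝ) τ, c n * (1 - Real.exp (-(a n * max u 0)))) =
        ∫ u in Set.Ioc (0:ℝ) τ, c n * (1 - Real.exp (-(a n * u))) := by
      apply setIntegral_congr_fun measurableSet_Ioc
      intro u hu
      simp only [max_eq_left hu.1.le]
    rw [e1, MeasureTheory.integral_const_mul]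
    congr 1
    have hI : (∫ u in (0:ℝ)..τ, (1 - Real.exp (-(a n * u)))) =
        τ - (1 - Real.exp (-(a n * τ))) / a n := by
      have hiexp : IntervalIntegrable (fun u : ℝ => Real.exp (-(a n * u))) volume 0 τ := by
        apply Continuous.intervalIntegrable
        exact Real.continuous_exp.comp (continuous_const.mul continuous_id).neg
      rw [intervalIntegral.integral_sub (intervalIntegrable_const) hiexp,
        int_exp_interval (ha n).ne' 0 τ]
      simp [Real.exp_zero]
    rw [intervalIntegral.integral_of_le hτ0.le] at hI
    exact hI
  -- (C) integral of G over Ioc τ tHat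
  have hIG : (∫ u in Set.Ioc τ tHat, G u) = C * ∑' n, c n * ((Real.exp (a n * τ) - 1) *
      ((Real.exp (-(a n * τ)) - Real.exp (-(a n * tHat))) / a n)) := by
    have e0 : (∫ u in Set.Ioc τ tHat, G u) = ∫ u in Set.Ioc τ tHat,
        C * ∑' n, c n * (Real.exp (-(a n * (u - τ))) - Real.exp (-(a n * u))) := by
      apply setIntegral_congr_fun measurableSet_Ioc
      intro u hu
      rw [hGeq u hu.1.le, hfc2]
    rw [e0, MeasureTheory.integral_const_mul]
    congr 1
    have hint : ∀ n, Integrable (fun u : ℝ => c n *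
        (Real.exp (-(a n * (u - τ))) - Real.exp (-(a n * u))))
        (volume.restrict (Set.Ioc τ tHat)) := fun n => (hcont2 n).integrableOn_Ioc
    have hnormbd : ∀ n, (∫ u in Set.Ioc τ tHat,
        ‖c n * (Real.exp (-(a n * (u - τ))) - Real.exp (-(a n * u)))‖) ≤ |c n| * (tHat - τ) := by
      intro n
      calc (∫ u in Set.Ioc τ tHat, ‖c n * (Real.exp (-(a n * (u - τ))) - Real.exp (-(a n * u)))‖)
          ≤ ∫ _u in Set.Ioc τ tHat, |c n| := by
            apply setIntegral_mono_on (hint n).norm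
              (integrableOn_const measure_Ioc_lt_top.ne) measurableSet_Ioc
            intro u hu
            rw [Real.norm_eq_abs, abs_mul]
            have h := exp_term_bound2 (ha n) hτ0.le (by linarith [hu.1] : τ ≤ u)
            have habs : |Real.exp (-(a n * (u - τ))) - Real.exp (-(a n * u))| ≤ 1 :=
              abs_le.2 ⟨by linarith [h.1], h.2⟩
            nlinarith [abs_nonneg (c n)]
        _ = |c n| * (tHat - τ) := by
            rw [setIntegral_const, measureReal_def, Real.volume_Ioc, smul_eq_mul,
              ENNReal.toReal_ofReal (by linarith), mul_comm]
    have hsummable : Summable fun n => ∫ u in Set.Ioc τ tHat,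
        ‖c n * (Real.exp (-(a n * (u - τ))) - Real.exp (-(a n * u)))‖ :=
      Summable.of_nonneg_of_le (fun n => integral_nonneg fun u => norm_nonneg _)
        hnormbd (hsum.mul_right (tHat - τ))
    rw [← integral_tsum_of_summable_integral_norm hint hsummable]
    apply tsum_congr
    intro n
    rw [MeasureTheory.integral_const_mul]
    congr 1
    have e1 : (∫ u in Set.Ioc τ tHat, (Real.exp (-(a n * (u - τ))) - Real.exp (-(a n * u)))) =
        ∫ u in Set.Ioc τ tHat, (Real.exp (a n * τ) - 1) * Real.exp (-(a n * u)) := by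
      apply setIntegral_congr_fun measurableSet_Ioc
      intro u _
      simp only [hexp1 n u]
      ring
    rw [e1, MeasureTheory.integral_const_mul]
    have hI : (∫ u in τ..tHat, Real.exp (-(a n * u))) =
        (Real.exp (-(a n * τ)) - Real.exp (-(a n * tHat))) / a n := int_exp_interval (ha n).ne' τ tHat
    rw [intervalIntegral.integral_of_le h1.le] at hI
    rw [hI]
  -- (D) J
  have hJval : J = C * ∑' n, c n * ((Real.exp (a n * τ) - 1) * (Real.exp (-(a n * tHat)) / a n)) := by
    rw [hJdef]
    have e0 : (∫ x in Set.Ioi tHat, fc2 x) = ∫ u in Set.Ioi tHat,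
        C * ∑' n, c n * ((Real.exp (a n * τ) - 1) * Real.exp (-(a n * u))) := by
      apply setIntegral_congr_fun measurableSet_Ioi
      intro u _
      rw [hfc2]
      congr 1
      apply tsum_congr
      intro n
      rw [hexp1 n u]
      ring
    rw [e0, MeasureTheory.integral_const_mul]
    congr 1
    have hint : ∀ n, Integrable (fun u : ℝ => c n * ((Real.exp (a n * τ) - 1) *
        Real.exp (-(a n * u)))) (volume.restrict (Set.Ioi tHat)) := by
      intro n
      have h := (integrableOn_exp_Ioi (ha n) tHat).const_mul (c n * (Real.exp (a n * τ) - 1))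
      exact h.congr (ae_of_all _ fun u => by ring)
    have hexpge : ∀ n, (1:ℝ) ≤ Real.exp (a n * τ) :=
      fun n => Real.one_le_exp (by positivity)
    have hval : ∀ n, (∫ u in Set.Ioi tHat,
        ‖c n * ((Real.exp (a n * τ) - 1) * Real.exp (-(a n * u)))‖) =
        |c n| * ((Real.exp (a n * τ) - 1) * (Real.exp (-(a n * tHat)) / a n)) := by
      intro n
      have e1 : ∀ u : ℝ, ‖c n * ((Real.exp (a n * τ) - 1) * Real.exp (-(a n * u)))‖ =
          (|c n| * (Real.exp (a n * τ) - 1)) * Real.exp (-(a n * u)) := by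
        intro u
        rw [Real.norm_eq_abs, abs_mul, abs_mul,
          abs_of_nonneg (show (0:ℝ) ≤ Real.exp (a n * τ) - 1 by linarith [hexpge n]),
          abs_of_pos (Real.exp_pos (-(a n * u)))]
        ring
      simp_rw [e1]
      rw [MeasureTheory.integral_const_mul, int_exp_Ioi (ha n) tHat]
      ring
    have hbdJ : ∀ n, |c n| * ((Real.exp (a n * τ) - 1) * (Real.exp (-(a n * tHat)) / a n)) ≤
        |c n| * τ := by
      intro n
      apply mul_le_mul_of_nonneg_left ?_ (abs_nonneg _)
      rw [mul_div_assoc'] at *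
      rw [div_le_iff₀ (ha n)]
      have h2 : Real.exp (-(a n * tHat)) ≤ Real.exp (-(a n * τ)) :=
        Real.exp_le_exp.2 (by nlinarith [ha n])
      have h3 : Real.exp (a n * τ) * Real.exp (-(a n * τ)) = 1 := by
        rw [← Real.exp_add]; simp
      have h4 := Real.add_one_le_exp (-(a n * τ))
      have h5 := hexpge n
      have h6 := (Real.exp_pos (-(a n * tHat))).le
      nlinarith
    have hsummable : Summable fun n => ∫ u in Set.Ioi tHat,
        ‖c n * ((Real.exp (a n * τ) - 1) * Real.exp (-(a n * u)))‖ := by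
      apply Summable.of_nonneg_of_le (fun n => integral_nonneg fun u => norm_nonneg _)
        (fun n => le_of_le_of_eq (le_of_eq (hval n)) rfl |>.trans (hbdJ n)) (hsum.mul_right τ)
    rw [← integral_tsum_of_summable_integral_norm hint hsummable]
    apply tsum_congr
    intro n
    rw [MeasureTheory.integral_const_mul]
    congr 1
    rw [MeasureTheory.integral_const_mul, int_exp_Ioi (ha n) tHat]
  -- (A) interval integral of g
  have hIg : (∫ u in (0:ℝ)..tHat, g u) =
      (∫ u in Set.Ioc (0:ℝ) τ, F u) + ∫ u in Set.Ioc τ tHat, G u := by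
    rw [intervalIntegral.integral_of_le htHat0.le, hgdef]
    simp only
    rw [integral_add ((hFc.integrableOn_Ioc).indicator measurableSet_Ioc)
      ((hGc.integrableOn_Ioc).indicator measurableSet_Ioc),
      setIntegral_indicator measurableSet_Ioc, setIntegral_indicator measurableSet_Ioc]
    rw [Set.inter_eq_self_of_subset_right (Set.Ioc_subset_Ioc_right h1.le),
      Set.inter_eq_self_of_subset_right (Set.Ioc_subset_Ioc_left hτ0.le)]
  -- summability of the three coefficient families
  have hS1 : Summable fun n => c n * (τ - (1 - Real.exp (-(a n * τ))) / a n) := by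
    apply Summable.of_norm_bounded (hsum.mul_right τ)
    intro n
    rw [Real.norm_eq_abs, abs_mul]
    apply mul_le_mul_of_nonneg_left ?_ (abs_nonneg _)
    have h4 := Real.add_one_le_exp (-(a n * τ))
    have h5 : Real.exp (-(a n * τ)) ≤ 1 := Real.exp_le_one_iff.2 (by nlinarith [ha n])
    have h6 : 0 ≤ (1 - Real.exp (-(a n * τ))) / a n := by
      apply div_nonneg (by linarith) (ha n).le
    have h7 : (1 - Real.exp (-(a n * τ))) / a n ≤ τ := by
      rw [div_le_iff₀ (ha n)]
      nlinarith [ha n]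
    rw [abs_of_nonneg (by linarith)]
    linarith
  have hS2 : Summable fun n => c n * ((Real.exp (a n * τ) - 1) *
      ((Real.exp (-(a n * τ)) - Real.exp (-(a n * tHat))) / a n)) := by
    apply Summable.of_norm_bounded (hsum.mul_right τ)
    intro n
    rw [Real.norm_eq_abs, abs_mul]
    apply mul_le_mul_of_nonneg_left ?_ (abs_nonneg _)
    have h2 : Real.exp (-(a n * tHat)) ≤ Real.exp (-(a n * τ)) :=
      Real.exp_le_exp.2 (by nlinarith [ha n])
    have h3 : Real.exp (a n * τ) * Real.exp (-(a n * τ)) = 1 := by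
      rw [← Real.exp_add]; simp
    have h4 := Real.add_one_le_exp (-(a n * τ))
    have h5 : (1:ℝ) ≤ Real.exp (a n * τ) := Real.one_le_exp (by positivity)
    have h6 := (Real.exp_pos (-(a n * tHat))).le
    have h8 : 0 ≤ (Real.exp (a n * τ) - 1) * ((Real.exp (-(a n * τ)) - Real.exp (-(a n * tHat))) / a n) := by
      apply mul_nonneg (by linarith) (div_nonneg (by linarith) (ha n).le)
    rw [abs_of_nonneg h8, mul_div_assoc']
    rw [div_le_iff₀ (ha n)]
    nlinarith
  have hS3 : Summable fun n => c n * ((Real.exp (a n * τ) - 1) *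
      (Real.exp (-(a n * tHat)) / a n)) := by
    apply Summable.of_norm_bounded (hsum.mul_right τ)
    intro n
    rw [Real.norm_eq_abs, abs_mul]
    apply mul_le_mul_of_nonneg_left ?_ (abs_nonneg _)
    have h2 : Real.exp (-(a n * tHat)) ≤ Real.exp (-(a n * τ)) :=
      Real.exp_le_exp.2 (by nlinarith [ha n])
    have h3 : Real.exp (a n * τ) * Real.exp (-(a n * τ)) = 1 := by
      rw [← Real.exp_add]; simp
    have h4 := Real.add_one_le_exp (-(a n * τ))
    have h5 : (1:ℝ) ≤ Real.exp (a n * τ) := Real.one_le_exp (by positivity)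
    have h6 := (Real.exp_pos (-(a n * tHat))).le
    have h8 : 0 ≤ (Real.exp (a n * τ) - 1) * (Real.exp (-(a n * tHat)) / a n) := by
      apply mul_nonneg (by linarith) (div_nonneg (by linarith) (ha n).le)
    rw [abs_of_nonneg h8, mul_div_assoc']
    rw [div_le_iff₀ (ha n)]
    nlinarith
  -- value identity
  have hvalue : (∫ u in (0:ℝ)..tHat, g u * Hinf) + J =
      C * ∑' n, c n * (Hinf * τ + (1 - Hinf) *
        (Real.exp (-(a n * (tHat - τ))) - Real.exp (-(a n * tHat))) / a n) := by
    set P1 : ℕ → ℝ := fun n => c n * (τ - (1 - Real.exp (-(a n * τ))) / a n) with hP1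
    set P2 : ℕ → ℝ := fun n => c n * ((Real.exp (a n * τ) - 1) *
      ((Real.exp (-(a n * τ)) - Real.exp (-(a n * tHat))) / a n)) with hP2
    set P3 : ℕ → ℝ := fun n => c n * ((Real.exp (a n * τ) - 1) *
      (Real.exp (-(a n * tHat)) / a n)) with hP3
    rw [intervalIntegral.integral_mul_const, hIg, hIF, hIG, hJval]
    have e2 : ∀ n, (P1 n + P2 n) * Hinf + P3 n =
        c n * (Hinf * τ + (1 - Hinf) *
          (Real.exp (-(a n * (tHat - τ))) - Real.exp (-(a n * tHat))) / a n) := by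
      intro n
      have hEa : Real.exp (a n * τ) = (Real.exp (-(a n * τ)))⁻¹ := by
        rw [← Real.exp_neg, neg_neg]
      have hE3 : Real.exp (-(a n * (tHat - τ))) =
          Real.exp (-(a n * tHat)) * (Real.exp (-(a n * τ)))⁻¹ := by
        rw [← Real.exp_neg (-(a n * τ)), ← Real.exp_add]
        congr 1
        ring
      simp only [hP1, hP2, hP3]
      rw [hEa, hE3]
      have h1' := (Real.exp_pos (-(a n * τ))).ne'
      have h2' := (ha n).ne'
      field_simp
      ring
    calc (C * ∑' n, P1 n + C * ∑' n, P2 n) * Hinf + C * ∑' n, P3 n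
        = C * (((∑' n, P1 n) + ∑' n, P2 n) * Hinf + ∑' n, P3 n) := by ring
      _ = C * ((∑' n, (P1 n + P2 n)) * Hinf + ∑' n, P3 n) := by rw [← Summable.tsum_add hS1 hS2]
      _ = C * ((∑' n, (P1 n + P2 n) * Hinf) + ∑' n, P3 n) := by rw [← tsum_mul_right]
      _ = C * ∑' n, ((P1 n + P2 n) * Hinf + P3 n) := by
          rw [← Summable.tsum_add ((hS1.add hS2).mul_right Hinf) hS3]
      _ = C * ∑' n, c n * (Hinf * τ + (1 - Hinf) *
          (Real.exp (-(a n * (tHat - τ))) - Real.exp (-(a n * tHat))) / a n) := by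
          rw [tsum_congr e2]
  have hgoal := hfinal
  rw [hvalue] at hgoal
  simp only [ha_def] at hgoal
  exact hgoal
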